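/- (Tchakaloff) Let μ be a positive Borel measure on ℝⁿ all of whose moments of degree ≤ t are finite, and set σ_α = ∫ x^α dμ for every multi-index α with |α| ≤ t. Then there exist an integer r ≤ s_t = C(n+t, n), weights w₁,…,w_r > 0, and points ζ₁,…,ζ_r in the support of μ such that σ_α = ∑_{i=1}^r wᵢ ζᵢ^α for every α with |α| ≤ t. -/

import Mathlib

set_option maxHeartbeats 1000000
set_option linter.unusedSectionVars false

open MeasureTheory Set RealInnerProductSpace

/-- The support of a measure `μ` on a topological space: the set of points all of whose
open neighbourhoods have positive measure. -/
def measureSupport {X : Type*} [TopologicalSpace X] [MeasurableSpace X]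
    (μ : Measure X) : Set X :=
  {x | ∀ U : Set X, IsOpen U → x ∈ U → 0 < μ U}

section aux

set_option linter.unusedSectionVars false
variable {X : Type*} [TopologicalSpace X] [MeasurableSpace X]

lemma measure_compl_measureSupport [SecondCountableTopology X] (μ : Measure X) :
    μ (measureSupport μ)ᶜ = 0 := by
  obtain ⟨B, hBc, -, hB⟩ := TopologicalSpace.exists_countable_basis X
  set N : Set (Set X) := {U ∈ B | μ U = 0}
  have hsub : (measureSupport μ)ᶜ ⊆ ⋃₀ N := by
    intro x hx
    simp only [measureSupport, mem_compl_iff, mem_setOf_eq, not_forall] at hx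
    obtain ⟨U, hU, hxU, hμU⟩ := hx
    have hμU0 : μ U = 0 := by
      by_contra h
      exact hμU (pos_iff_ne_zero.mpr h)
    obtain ⟨V, hVB, hxV, hVU⟩ := hB.exists_subset_of_mem_open hxU hU
    exact ⟨V, ⟨hVB, measure_mono_null hVU hμU0⟩, hxV⟩
  refine measure_mono_null hsub (measure_sUnion_null_iff ?_ |>.mpr ?_)
  · exact hBc.mono (sep_subset _ _)
  · exact fun U hU => hU.2

lemma ae_mem_measureSupport [SecondCountableTopology X] (μ : Measure X) :
    ∀ᵐ x ∂μ, x ∈ measureSupport μ :=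
  (ae_iff.mpr (by exact measure_compl_measureSupport μ))

def conicCombos {E : Type*} [NormedAddCommGroup E] [NormedSpace ℝ E]
    (G : X → E) (K : Set X) : Set E :=
  {z | ∃ (m : ℕ) (w : Fin m → ℝ) (x : Fin m → X),
      (∀ i, 0 ≤ w i) ∧ (∀ i, x i ∈ K) ∧ z = ∑ i, w i • G (x i)}

variable {E : Type*} [NormedAddCommGroup E] [NormedSpace ℝ E]

lemma zero_mem_conicCombos (G : X → E) (K : Set X) : (0:E) ∈ conicCombos G K :=
  ⟨0, ![], ![], by simp, by simp, by simp⟩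

lemma mem_conicCombos_of_mem (G : X → E) {K : Set X} {x : X} (hx : x ∈ K) :
    G x ∈ conicCombos G K :=
  ⟨1, fun _ => 1, fun _ => x, fun _ => zero_le_one, fun _ => hx, by simp⟩

lemma conicCombos_smul {G : X → E} {K : Set X} {c : ℝ} (hc : 0 ≤ c) {a : E}
    (ha : a ∈ conicCombos G K) : c • a ∈ conicCombos G K := by
  obtain ⟨m, w, x, hw, hx, rfl⟩ := ha
  exact ⟨m, fun i => c * w i, x, fun i => mul_nonneg hc (hw i),
    hx, by simp [Finset.smul_sum, mul_smul]⟩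

lemma conicCombos_add {G : X → E} {K : Set X} {a b : E}
    (ha : a ∈ conicCombos G K) (hb : b ∈ conicCombos G K) :
    a + b ∈ conicCombos G K := by
  obtain ⟨m, w, x, hw, hx, rfl⟩ := ha
  obtain ⟨m', w', x', hw', hx', rfl⟩ := hb
  refine ⟨m + m', Fin.addCases w w', Fin.addCases x x', ?_, ?_, ?_⟩
  · intro i
    refine Fin.addCases (fun j => ?_) (fun j => ?_) i <;> simp [hw _, hw' _]
  · intro i
    refine Fin.addCases (fun j => ?_) (fun j => ?_) i <;> simp [hx _, hx' _]
  · rw [Fin.sum_univ_add]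
    simp

lemma conicCombos_convex (G : X → E) (K : Set X) : Convex ℝ (conicCombos G K) :=
  fun _ ha _ hb _ _ hp hq _ =>
    conicCombos_add (conicCombos_smul hp ha) (conicCombos_smul hq hb)

lemma conicCombos_subset_span (G : X → E) (K : Set X) :
    conicCombos G K ⊆ (Submodule.span ℝ (G '' K) : Set E) := by
  rintro z ⟨m, w, x, hw, hx, rfl⟩
  exact Submodule.sum_mem _ fun i _ => Submodule.smul_mem _ _
    (Submodule.subset_span ⟨x i, hx i, rfl⟩)

lemma integral_mem_closure_conicCombos [OpensMeasurableSpace X] [SecondCountableTopology X]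
    [CompleteSpace E] (μ : Measure X) [IsFiniteMeasure μ] {G : X → E}
    (hG : Integrable G μ) :
    (∫ x, G x ∂μ) ∈ closure (conicCombos G (measureSupport μ)) := by
  set K := measureSupport μ
  rcases eq_or_ne μ 0 with rfl | hμ
  · simp only [integral_zero_measure]
    exact subset_closure (zero_mem_conicCombos G K)
  · have : NeZero μ := ⟨hμ⟩
    set s := closure (convexHull ℝ (G '' K)) with hs
    have havg : (⨍ x, G x ∂μ) ∈ s := by
      refine (convex_convexHull ℝ _).closure.average_mem isClosed_closure ?_ hG
      filter_upwards [ae_mem_measureSupport μ] with x hx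
      exact subset_closure (subset_convexHull ℝ _ ⟨x, hx, rfl⟩)
    have hc : (μ univ).toReal ≠ 0 := by
      simp [ENNReal.toReal_ne_zero, measure_ne_top, hμ, Measure.measure_univ_eq_zero]
    have hy : (∫ x, G x ∂μ) = (μ univ).toReal • ⨍ x, G x ∂μ := by
      rw [average_eq, measureReal_def, smul_inv_smul₀ hc]
    rw [hy]
    have h0 : G '' K ⊆ conicCombos G K := by
      rintro e ⟨x, hx, rfl⟩
      exact mem_conicCombos_of_mem G hx
    have h1 : ((μ univ).toReal • ·) '' (convexHull ℝ (G '' K)) ⊆ conicCombos G K := by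
      rintro _ ⟨z, hz, rfl⟩
      exact conicCombos_smul ENNReal.toReal_nonneg
        (convexHull_min h0 (conicCombos_convex G K) hz)
    have h2 : ((μ univ).toReal • ·) '' s ⊆ closure (conicCombos G K) :=
      (image_closure_subset_closure_image (continuous_const_smul _)).trans
        (closure_mono h1)
    exact h2 (mem_image_of_mem _ havg)

end aux


lemma caratheodory_cone {E : Type*} [AddCommGroup E] [Module ℝ E] {γ : Type*}
    [DecidableEq γ] (v : γ → E) :
    ∀ (n : ℕ) (s : Finset γ) (_ : s.card ≤ n) (w : γ → ℝ) (_ : ∀ i ∈ s, 0 ≤ w i),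
    ∃ (s' : Finset γ) (w' : γ → ℝ), s' ⊆ s ∧ (∀ i ∈ s', 0 < w' i) ∧
      LinearIndependent ℝ (fun i : ↥s' => v i) ∧
      ∑ i ∈ s', w' i • v i = ∑ i ∈ s, w i • v i := by
  intro n
  induction n with
  | zero =>
    intro s hs w hw
    rw [Nat.le_zero, Finset.card_eq_zero] at hs
    subst hs
    exact ⟨∅, w, subset_rfl, by simp, linearIndependent_empty_type, by simp⟩
  | succ n ih =>
    intro s hs w hw
    classical
    set s₁ := s.filter (fun i => 0 < w i) with hs₁
    have hsub1 : s₁ ⊆ s := Finset.filter_subset _ _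
    have hsum1 : ∑ i ∈ s₁, w i • v i = ∑ i ∈ s, w i • v i := by
      refine Finset.sum_subset hsub1 (fun i hi hni => ?_)
      have : w i = 0 := by
        have h1 := hw i hi
        simp only [hs₁, Finset.mem_filter, not_and] at hni
        have := hni hi
        linarith
      simp [this]
    have hw1 : ∀ i ∈ s₁, 0 < w i := fun i hi => (Finset.mem_filter.mp hi).2
    by_cases hli : LinearIndependent ℝ (fun i : ↥s₁ => v i)
    · exact ⟨s₁, w, hsub1, hw1, hli, hsum1⟩
    · -- extract a dependency with a positive coefficient
      rw [Fintype.linearIndependent_iff] at hli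
      push_neg at hli
      obtain ⟨g, hgsum, i₁, hg1⟩ := hli
      have key : ∃ c : γ → ℝ, (∑ j ∈ s₁, c j • v j = 0) ∧ ∃ j ∈ s₁, 0 < c j := by
        set c : γ → ℝ := fun j => if h : j ∈ s₁ then g ⟨j, h⟩ else 0 with hc
        have hcs : ∑ j ∈ s₁, c j • v j = 0 := by
          rw [← hgsum, ← Finset.sum_coe_sort s₁ (fun j => c j • v j)]
          refine Finset.sum_congr rfl (fun i _ => ?_)
          simp [hc, i.2]
        have hci : c ↑i₁ ≠ 0 := by simpa [hc, i₁.2] using hg1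
        rcases lt_or_gt_of_ne hci with hneg | hpos
        · refine ⟨-c, by simp [hcs], ↑i₁, i₁.2, by simpa using hneg⟩
        · exact ⟨c, hcs, ↑i₁, i₁.2, hpos⟩
      obtain ⟨c, hcsum, j₀, hj₀s, hj₀pos⟩ := key
      set sp := s₁.filter (fun j => 0 < c j) with hsp
      have hspne : sp.Nonempty := ⟨j₀, Finset.mem_filter.mpr ⟨hj₀s, hj₀pos⟩⟩
      obtain ⟨i₀, hi₀sp, hi₀eq⟩ := Finset.exists_mem_eq_inf' hspne (fun j => w j / c j)
      set τ := sp.inf' hspne (fun j => w j / c j) with hτ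
      have hi₀s₁ : i₀ ∈ s₁ := (Finset.mem_filter.mp hi₀sp).1
      have hi₀c : 0 < c i₀ := (Finset.mem_filter.mp hi₀sp).2
      have hτ0 : 0 ≤ τ := by
        rw [hτ]
        apply Finset.le_inf'
        intro j hj
        have hjs := (Finset.mem_filter.mp hj).1
        exact div_nonneg (hw j (hsub1 hjs)) (Finset.mem_filter.mp hj).2.le
      set w' : γ → ℝ := fun j => w j - τ * c j with hw'
      have hw'nn : ∀ j ∈ s₁, 0 ≤ w' j := by
        intro j hj
        rcases le_or_gt (c j) 0 with hcj | hcj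
        · have : τ * c j ≤ 0 := mul_nonpos_of_nonneg_of_nonpos hτ0 hcj
          have := hw1 j hj
          simp only [hw']
          linarith
        · have hjsp : j ∈ sp := Finset.mem_filter.mpr ⟨hj, hcj⟩
          have hle : τ ≤ w j / c j := Finset.inf'_le _ hjsp
          rw [le_div_iff₀ hcj] at hle
          simp only [hw']
          linarith [hle]
      have hw'i₀ : w' i₀ = 0 := by
        have : τ = w i₀ / c i₀ := hi₀eq
        simp only [hw', this]
        rw [div_mul_cancel₀ _ (ne_of_gt hi₀c), sub_self]
      have hsum2 : ∑ j ∈ s₁, w' j • v j = ∑ j ∈ s₁, w j • v j := by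
        simp only [hw', sub_smul, Finset.sum_sub_distrib, mul_smul]
        rw [← Finset.smul_sum, hcsum, smul_zero, sub_zero]
      have hcard2 : (s₁.erase i₀).card ≤ n := by
        have h1 : (s₁.erase i₀).card < s₁.card := Finset.card_erase_lt_of_mem hi₀s₁
        have h2 : s₁.card ≤ s.card := Finset.card_le_card hsub1
        omega
      obtain ⟨s', w'', hsub', hpos', hli', hsum'⟩ :=
        ih (s₁.erase i₀) hcard2 w' (fun j hj => hw'nn j (Finset.mem_of_mem_erase hj))
      refine ⟨s', w'', hsub'.trans ((Finset.erase_subset _ _).trans hsub1), hpos', hli', ?_⟩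
      rw [hsum', ← hsum1, ← hsum2]
      exact Finset.sum_erase _ (by rw [hw'i₀, zero_smul])


noncomputable instance idxFintype (n t : ℕ) :
    Fintype {α : Fin n →₀ ℕ // (∑ j, α j) ≤ t} := by
  classical
  apply Fintype.ofInjective
    (fun α : {α : Fin n →₀ ℕ // (∑ j, α j) ≤ t} =>
      ((fun j => (⟨(α : Fin n →₀ ℕ) j, by
        have h1 : (α : Fin n →₀ ℕ) j ≤ ∑ i, (α : Fin n →₀ ℕ) i :=
          Finset.single_le_sum (fun i _ => Nat.zero_le _) (Finset.mem_univ j)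
        have h2 := α.2
        omega⟩ : Fin (t+1))) : Fin n → Fin (t+1)))
  intro α β h
  apply Subtype.ext
  ext j
  have := congrFun h j
  simpa [Fin.ext_iff] using this

lemma finsupp_card_eq (n : ℕ) (α : Fin n →₀ ℕ) :
    Multiset.card (Finsupp.toMultiset α) = ∑ j, α j := by
  rw [Finsupp.card_toMultiset, Finsupp.sum_fintype]
  · rfl
  · intro i; rfl

lemma idx_card_le (n t : ℕ) :
    Fintype.card {α : Fin n →₀ ℕ // (∑ j, α j) ≤ t} ≤ (n + t).choose n := by
  classical
  have hinj : Function.Injective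
      (fun α : {α : Fin n →₀ ℕ // (∑ j, α j) ≤ t} =>
        (⟨Multiset.map (Fin.castSucc) (Finsupp.toMultiset (α : Fin n →₀ ℕ)) +
          Multiset.replicate (t - ∑ j, (α : Fin n →₀ ℕ) j) (Fin.last n), by
            rw [Multiset.card_add, Multiset.card_map, Multiset.card_replicate,
              finsupp_card_eq]
            have := α.2
            omega⟩ : Sym (Fin (n+1)) t)) := by
    intro α β h
    have hv := congrArg Subtype.val h
    simp only at hv
    apply Subtype.ext
    ext j
    have hcount := congrArg (Multiset.count (Fin.castSucc j)) hv
    have hne : (Fin.castSucc j) ≠ Fin.last n := (Fin.castSucc_lt_last j).ne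
    simp only [Multiset.count_add, Multiset.count_replicate, if_neg (Ne.symm hne),
      Multiset.count_map_eq_count' _ _ (Fin.castSucc_injective n),
      Finsupp.count_toMultiset, add_zero] at hcount
    exact hcount
  calc Fintype.card {α : Fin n →₀ ℕ // (∑ j, α j) ≤ t}
      ≤ Fintype.card (Sym (Fin (n+1)) t) := Fintype.card_le_of_injective _ hinj
    _ = (n + t).choose n := by
        rw [Sym.card_sym_eq_multichoose, Fintype.card_fin, Nat.multichoose_eq]
        have h1 : n + 1 + t - 1 = n + t := by omega
        rw [h1, ← Nat.choose_symm (Nat.le_add_right n t)]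
        congr 1
        omega

section core
variable {X : Type*} [TopologicalSpace X] [MeasurableSpace X]
  {ι : Type*} [Fintype ι]

theorem tchakaloff_core [OpensMeasurableSpace X] [SecondCountableTopology X] :
    ∀ (k : ℕ) (W : Submodule ℝ (EuclideanSpace ℝ ι)), Module.finrank ℝ W ≤ k →
      ∀ (μ : Measure X) [IsFiniteMeasure μ], ∀ (G : X → EuclideanSpace ℝ ι),
        Continuous G → Integrable G μ →
        (∀ x ∈ measureSupport μ, G x ∈ W) →
        (∫ x, G x ∂μ) ∈ conicCombos G (measureSupport μ) := by
  intro k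
  induction k with
  | zero =>
    intro W hW μ _ G hGc hGi hGW
    rw [Nat.le_zero, Submodule.finrank_eq_zero] at hW
    subst hW
    have : ∀ᵐ x ∂μ, G x = 0 := by
      filter_upwards [ae_mem_measureSupport μ] with x hx
      simpa using hGW x hx
    rw [integral_eq_zero_of_ae this]
    exact zero_mem_conicCombos G _
  | succ k ih =>
    intro W hW μ _ G hGc hGi hGW
    set K := measureSupport μ with hK
    set C := conicCombos G K with hC
    set y := ∫ x, G x ∂μ with hy
    have hCW : C ⊆ (W : Set _) := fun z hz =>
      (Submodule.span_le.mpr (by rintro _ ⟨x, hx, rfl⟩; exact hGW x hx))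
        (conicCombos_subset_span G K hz)
    have hWclosed : IsClosed (W : Set (EuclideanSpace ℝ ι)) :=
      Submodule.closed_of_finiteDimensional W
    have hyclC : y ∈ closure C := integral_mem_closure_conicCombos μ hGi
    have hyW : y ∈ W := by
      have := closure_mono hCW hyclC
      rwa [hWclosed.closure_eq] at this
    -- move to the subtype V = ↥W
    set C' : Set ↥W := (Subtype.val) ⁻¹' C with hC'
    have hvalC' : Subtype.val '' C' = C := by
      ext z
      constructor
      · rintro ⟨z', hz', rfl⟩; exact hz'
      · intro hz; exact ⟨⟨z, hCW hz⟩, hz, rfl⟩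
    set y' : ↥W := ⟨y, hyW⟩ with hy'
    have hy'cl : y' ∈ closure C' := by
      have hind : Topology.IsInducing (Subtype.val : ↥W → EuclideanSpace ℝ ι) :=
        Topology.IsInducing.subtypeVal
      rw [hind.closure_eq_preimage_closure_image, mem_preimage, hvalC']
      exact hyclC
    have hC'convex : Convex ℝ C' :=
      (conicCombos_convex G K).linear_preimage W.subtype
    have hC'smul : ∀ (c : ℝ), 0 ≤ c → ∀ z ∈ C', c • z ∈ C' := by
      intro c hc z hz
      have : (↑(c • z) : EuclideanSpace ℝ ι) = c • ↑z := rfl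
      simp only [hC', mem_preimage, this]
      exact conicCombos_smul hc hz
    have hmemC' : ∀ (x) (hx : x ∈ K), (⟨G x, hGW x hx⟩ : ↥W) ∈ C' :=
      fun x hx => mem_conicCombos_of_mem G hx
    -- reduction: a functional vanishing on G(K) but not on W lets us recurse
    have hreduce : ∀ φ : EuclideanSpace ℝ ι →L[ℝ] ℝ,
        (∀ x ∈ K, φ (G x) = 0) → (∃ w ∈ W, φ w ≠ 0) → y ∈ C := by
      intro φ hφK hw
      obtain ⟨w, hwW, hwφ⟩ := hw
      set W₁ := W ⊓ LinearMap.ker (φ : EuclideanSpace ℝ ι →ₗ[ℝ] ℝ) with hW₁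
      have hlt : W₁ < W := by
        refine lt_of_le_of_ne inf_le_left (fun h => hwφ ?_)
        have : w ∈ W₁ := h ▸ hwW
        simpa using (Submodule.mem_inf.mp this).2
      have hfr : Module.finrank ℝ W₁ ≤ k := by
        have := Submodule.finrank_lt_finrank_of_lt hlt
        omega
      exact ih W₁ hfr μ G hGc hGi
        (fun x hx => Submodule.mem_inf.mpr ⟨hGW x hx, by simpa using hφK x hx⟩)
    have h0C' : (0 : ↥W) ∈ C' := by
      have : ((0 : ↥W) : EuclideanSpace ℝ ι) = 0 := rfl
      simp only [hC', mem_preimage, this]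
      exact zero_mem_conicCombos G K
    by_cases hspan : Submodule.span ℝ C' = ⊤
    · -- the cone spans W
      have haff : affineSpan ℝ C' = ⊤ := by
        rw [AffineSubspace.affineSpan_eq_top_iff_vectorSpan_eq_top_of_nonempty ℝ ↥W ↥W (⟨0, h0C'⟩ : C'.Nonempty)]
        rw [← top_le_iff, ← hspan, Submodule.span_le]
        intro c hc
        have := vsub_mem_vectorSpan ℝ hc h0C'
        simpa using this
      obtain ⟨z₀, hz₀⟩ := (hC'convex.interior_nonempty_iff_affineSpan_eq_top).mpr haff
      have hz₀cl : z₀ ∈ interior (closure C') := interior_mono subset_closure hz₀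
      by_cases hyint : y' ∈ interior (closure C')
      · -- y' is a relative interior point: conclude directly
        by_cases hyz : y' = z₀
        · have hy'C : y' ∈ C' := by rw [hyz]; exact interior_subset hz₀
          exact hy'C
        · obtain ⟨ε, hε, hball⟩ := Metric.mem_nhds_iff.mp (mem_interior_iff_mem_nhds.mp hyint)
          have hyz' : (0:ℝ) < ‖y' - z₀‖ := by
            rw [norm_pos_iff, sub_ne_zero]; exact hyz
          set δ : ℝ := ε / (2 * ‖y' - z₀‖) with hδ
          have hδpos : 0 < δ := by positivity
          set wpt : ↥W := y' + δ • (y' - z₀) with hwpt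
          have hwcl : wpt ∈ closure C' := by
            apply hball
            rw [Metric.mem_ball, dist_eq_norm]
            have : wpt - y' = δ • (y' - z₀) := by rw [hwpt]; abel
            rw [this, norm_smul, Real.norm_eq_abs, abs_of_pos hδpos, hδ]
            rw [div_mul_eq_mul_div, mul_comm (2:ℝ) ‖y' - z₀‖, ← div_div,
              mul_div_assoc, div_self (ne_of_gt hyz'), mul_one]
            linarith
          have h1δ : (0:ℝ) < 1 + δ := by linarith
          have hcombo := hC'convex.combo_interior_closure_mem_interior hz₀ hwcl
            (a := δ / (1 + δ)) (b := 1 / (1 + δ)) (by positivity)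
            (by positivity) (by field_simp <;> ring)
          have heq : (δ / (1 + δ)) • z₀ + (1 / (1 + δ)) • wpt = y' := by
            rw [hwpt]
            match_scalars <;> (field_simp <;> ring)
          rw [heq] at hcombo
          have hy'C : y' ∈ C' := interior_subset hcombo
          exact hy'C
      · -- separation: supporting functional at y'
        obtain ⟨f, hf⟩ := geometric_hahn_banach_open_point
          (hC'convex.closure.interior) isOpen_interior hyint
        have hstep1 : ∀ c ∈ closure C', f c ≤ f y' := by
          intro c hc
          have hev : ∀ θ : ℝ, θ ∈ Ioc (0:ℝ) 1 → f (θ • z₀ + (1 - θ) • c) < f y' := by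
            intro θ hθ
            refine hf _ ?_
            exact hC'convex.closure.combo_interior_closure_mem_interior hz₀cl
              (by rwa [closure_closure]) hθ.1 (by linarith [hθ.2]) (by ring)
          have hcont : Filter.Tendsto (fun θ : ℝ => f (θ • z₀ + (1 - θ) • c))
              (nhdsWithin 0 (Ioi 0)) (nhds (f ((0:ℝ) • z₀ + (1 - (0:ℝ)) • c))) := by
            refine Filter.Tendsto.mono_left ?_ nhdsWithin_le_nhds
            exact (f.continuous.comp ((continuous_id.smul continuous_const).add
              ((continuous_const.sub continuous_id).smul continuous_const))).tendsto 0
          simp only [zero_smul, sub_zero, one_smul, zero_add] at hcont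
          refine le_of_tendsto hcont ?_
          filter_upwards [Ioc_mem_nhdsGT_of_mem
            (show (0:ℝ) ∈ Ico (0:ℝ) 1 by constructor <;> norm_num)] with θ hθ
          exact (hev θ hθ).le
        have hstep2 : ∀ c ∈ C', f c ≤ 0 := by
          intro c hc
          by_contra hpos
          push_neg at hpos
          set s : ℝ := (max (f y') 0 + 1) / f c with hs
          have hs0 : 0 ≤ s := by
            apply div_nonneg _ hpos.le
            have := le_max_right (f y') 0
            linarith
          have h1 := hstep1 _ (subset_closure (hC'smul s hs0 c hc))
          rw [_root_.map_smul, smul_eq_mul, hs, div_mul_cancel₀ _ (ne_of_gt hpos)] at h1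
          have := le_max_left (f y') 0
          linarith
        have hy'le : f y' ≤ 0 :=
          closure_minimal hstep2 (isClosed_le f.continuous continuous_const) hy'cl
        have hy'ge : (0:ℝ) ≤ f y' := by simpa using hstep1 0 (subset_closure h0C')
        have hfy0 : f y' = 0 := le_antisymm hy'le hy'ge
        set φ : EuclideanSpace ℝ ι →L[ℝ] ℝ := f.comp (W.orthogonalProjectionOnto) with hφ
        have hφW : ∀ (v) (hv : v ∈ W), φ v = f ⟨v, hv⟩ := by
          intro v hv
          rw [hφ, ContinuousLinearMap.comp_apply]
          congr 1
          exact Submodule.orthogonalProjectionOnto_mem_subspace_eq_self (⟨v, hv⟩ : ↥W)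
        have hφle : ∀ x ∈ K, φ (G x) ≤ 0 := fun x hx => by
          rw [hφW _ (hGW x hx)]; exact hstep2 _ (hmemC' x hx)
        have hint0 : ∫ x, φ (G x) ∂μ = 0 := by
          rw [ContinuousLinearMap.integral_comp_comm φ hGi]
          show φ y = 0
          rw [hφW y hyW]
          exact hfy0
        have hneg : (fun x => -φ (G x)) =ᵐ[μ] 0 := by
          rw [← integral_eq_zero_iff_of_nonneg_ae]
          · rw [integral_neg, hint0, neg_zero]
          · filter_upwards [ae_mem_measureSupport μ] with x hx
            simpa using neg_nonneg.mpr (hφle x hx)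
          · exact (φ.integrable_comp hGi).neg
        have hnull : μ {x | φ (G x) < 0} = 0 := by
          have h1 : μ {x | ¬ (-φ (G x) = (0:X→ℝ) x)} = 0 := hneg
          refine measure_mono_null (fun x hx => ?_) h1
          simp only [mem_setOf_eq, Pi.zero_apply, neg_eq_zero]
          exact ne_of_lt hx
        have hKzero : ∀ x ∈ K, φ (G x) = 0 := by
          intro x hx
          refine le_antisymm (hφle x hx) ?_
          by_contra h
          push_neg at h
          have hopen : IsOpen {x | φ (G x) < 0} :=
            isOpen_lt (φ.continuous.comp hGc) continuous_const
          have := hx _ hopen h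
          rw [hnull] at this
          exact lt_irrefl 0 this
        refine hreduce φ hKzero ⟨↑z₀, z₀.2, ?_⟩
        rw [hφW _ z₀.2]
        have h2 := hf z₀ hz₀cl
        rw [hfy0] at h2
        simpa using ne_of_lt h2
    · -- the cone does not span W: use an orthogonal vector
      have hne : (Submodule.span ℝ C')ᗮ ≠ ⊥ := by
        rw [ne_eq, Submodule.orthogonal_eq_bot_iff]
        exact hspan
      obtain ⟨u, huo, hu0⟩ := Submodule.exists_mem_ne_zero_of_ne_bot hne
      set f : ↥W →L[ℝ] ℝ := innerSL ℝ u with hfdef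
      set φ : EuclideanSpace ℝ ι →L[ℝ] ℝ := f.comp (W.orthogonalProjectionOnto) with hφ
      have hφW : ∀ (v) (hv : v ∈ W), φ v = f ⟨v, hv⟩ := by
        intro v hv
        rw [hφ, ContinuousLinearMap.comp_apply]
        congr 1
        exact Submodule.orthogonalProjectionOnto_mem_subspace_eq_self (⟨v, hv⟩ : ↥W)
      have hKzero : ∀ x ∈ K, φ (G x) = 0 := by
        intro x hx
        rw [hφW _ (hGW x hx)]
        have hc : (⟨G x, hGW x hx⟩ : ↥W) ∈ Submodule.span ℝ C' :=
          Submodule.subset_span (hmemC' x hx)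
        have h2 := (Submodule.mem_orthogonal _ u).mp huo _ hc
        have hgoal : f (⟨G x, hGW x hx⟩ : ↥W) = ⟪u, (⟨G x, hGW x hx⟩ : ↥W)⟫ :=
          innerSL_apply_apply (𝕜 := ℝ) u _
        rw [hgoal, real_inner_comm]
        exact h2
      refine hreduce φ hKzero ⟨↑u, u.2, ?_⟩
      rw [hφW _ u.2]
      have hgoal : f (⟨↑u, u.2⟩ : ↥W) = ⟪u, u⟫ := innerSL_apply_apply (𝕜 := ℝ) u u
      rw [hgoal]
      exact inner_self_ne_zero.mpr hu0

end core

/-- Tchakaloff: a positive Borel measure on `ℝⁿ` with finite moments up to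
degree `t` admits an `r`-atomic representation of its moments with `r ≤ C(n+t, n)`,
positive weights, and points in the support of the measure. -/
theorem stmt2 (n t : ℕ) (μ : Measure (Fin n → ℝ))
    (hmom : ∀ α : Fin n →₀ ℕ, (∑ j, α j) ≤ t →
      Integrable (fun x : Fin n → ℝ => ∏ j, x j ^ α j) μ) :
    ∃ r : ℕ, r ≤ Nat.choose (n + t) n ∧
      ∃ (w : Fin r → ℝ) (ζ : Fin r → (Fin n → ℝ)),
        (∀ i, 0 < w i) ∧ (∀ i, ζ i ∈ measureSupport μ) ∧
        ∀ α : Fin n →₀ ℕ, (∑ j, α j) ≤ t →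
          (∫ x, (∏ j, x j ^ α j) ∂μ) = ∑ i, w i * ∏ j, (ζ i j) ^ α j := by
  classical
  haveI hfin : IsFiniteMeasure μ := by
    have h0 : Integrable (fun _ : Fin n → ℝ => (1:ℝ)) μ := by
      have := hmom 0 (by simp)
      simpa using this
    constructor
    rcases integrable_const_iff.mp h0 with h | h
    · exact absurd h one_ne_zero
    · exact h.measure_univ_lt_top
  set ι := {α : Fin n →₀ ℕ // (∑ j, α j) ≤ t} with hι
  set G : (Fin n → ℝ) → EuclideanSpace ℝ ι :=
    fun x => WithLp.toLp 2 (fun α : ι => ∏ j, x j ^ (↑α : Fin n →₀ ℕ) j : ι → ℝ) with hG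
  have hint : ∀ α : ι, Integrable (fun x : Fin n → ℝ => ∏ j, x j ^ (↑α : Fin n →₀ ℕ) j) μ :=
    fun α => hmom ↑α α.2
  have hGc : Continuous G := by
    refine (PiLp.continuous_toLp (p := 2) (β := fun _ : ι => ℝ)).comp ?_
    apply continuous_pi
    intro α
    exact continuous_finset_prod _ fun j _ => (continuous_apply j).pow _
  have hGrepr : ∀ x, G x =
      ∑ α : ι, (∏ j, x j ^ (↑α : Fin n →₀ ℕ) j) • EuclideanSpace.single α (1:ℝ) := by
    intro x
    ext β
    rw [WithLp.ofLp_sum, Finset.sum_apply]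
    simp only [PiLp.smul_apply, EuclideanSpace.single_apply, smul_eq_mul, mul_ite,
      mul_one, mul_zero]
    rw [Finset.sum_ite_eq Finset.univ β (fun α : ι => ∏ j, x j ^ (↑α : Fin n →₀ ℕ) j)]
    simp [hG]
  have hGi : Integrable G μ := by
    rw [show G = _ from funext hGrepr]
    exact integrable_finset_sum _ fun α _ => (hint α).smul_const _
  have hcore := tchakaloff_core (X := Fin n → ℝ) (ι := ι)
    (Module.finrank ℝ (EuclideanSpace ℝ ι)) ⊤ (by rw [finrank_top]) μ G hGc hGi
    (fun x _ => Submodule.mem_top)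
  obtain ⟨m, w0, x0, hw0, hx0, hsum0⟩ := hcore
  obtain ⟨s', w', hsub, hpos, hli, hsum'⟩ :=
    caratheodory_cone (fun i : Fin m => G (x0 i)) m Finset.univ (by simp) w0
      (fun i _ => hw0 i)
  have hr : s'.card ≤ (n + t).choose n := by
    have h1 : Fintype.card ↥s' ≤ Module.finrank ℝ (EuclideanSpace ℝ ι) :=
      hli.fintype_card_le_finrank
    rw [finrank_euclideanSpace, Fintype.card_coe] at h1
    exact h1.trans (idx_card_le n t)
  set e := s'.equivFin with he
  refine ⟨s'.card, hr, fun i => w' ↑(e.symm i), fun i => x0 ↑(e.symm i),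
    fun i => hpos _ (e.symm i).2, fun i => hx0 _, ?_⟩
  intro α hα
  set β : ι := ⟨α, hα⟩ with hβ
  have hproj : ∀ z : Fin n → ℝ, EuclideanSpace.proj β (G z) = ∏ j, z j ^ α j := fun z => rfl
  have hL : ∫ x, (∏ j, x j ^ α j) ∂μ = EuclideanSpace.proj β (∫ x, G x ∂μ) := by
    rw [← ContinuousLinearMap.integral_comp_comm _ hGi]
    exact integral_congr_ae (Filter.Eventually.of_forall fun z => (hproj z).symm)
  have hy2 : (∫ x, G x ∂μ) = ∑ i ∈ s', w' i • G (x0 i) := hsum0.trans hsum'.symm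
  rw [hL, hy2, _root_.map_sum]
  have hterm : ∀ i ∈ s', EuclideanSpace.proj β (w' i • G (x0 i)) =
      w' i * ∏ j, (x0 i) j ^ α j := by
    intro i _
    rw [_root_.map_smul, hproj (x0 i), smul_eq_mul]
  rw [Finset.sum_congr rfl hterm,
    ← Finset.sum_coe_sort s' (fun i => w' i * ∏ j, (x0 i) j ^ α j)]
  exact (Equiv.sum_comp e.symm fun i : ↥s' => w' ↑i * ∏ j, (x0 ↑i) j ^ α j).symm
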